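/- For all real numbers N ≥ 1 and K ≥ 1 there exists F_1 < 1 with the following property. Let B be a 4×4 real matrix with nonnegative entries, all of whose columns are nonzero, satisfying s_4(B) ≤ K·s_2(B), and let A be an invertible 4×4 matrix with nonnegative integer entries bounded above by N such that at least two rows of A have all entries positive and every other row of A equals a row of the 4×4 identity matrix. Then diam(𝒩(B·A)) ≤ F_1 · diam(𝒩(B)). -/

import Mathlib

/-- The `1`-norm of the `i`-th column of a `4×4` real matrix. -/
noncomputable def colNorm (X : Matrix (Fin 4) (Fin 4) ℝ) (i : Fin 4) : ℝ :=
  ∑ k, |X k i|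

/-- The largest column `1`-norm of a `4×4` matrix. -/
noncomputable def sMax (X : Matrix (Fin 4) (Fin 4) ℝ) : ℝ :=
  Finset.univ.sup' Finset.univ_nonempty (colNorm X)

/-- The second-smallest column `1`-norm of a `4×4` matrix (with multiplicity). -/
noncomputable def sSecond (X : Matrix (Fin 4) (Fin 4) ℝ) : ℝ :=
  (Finset.univ.filter (fun p : Fin 4 × Fin 4 => p.1 ≠ p.2)).inf'
    ⟨(0, 1), by decide⟩ (fun p => max (colNorm X p.1) (colNorm X p.2))

/-- The convex hull in Euclidean `ℝ⁴` of the four columns of `X`, each normalized to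
have `1`-norm one. -/
noncomputable def normColHull (X : Matrix (Fin 4) (Fin 4) ℝ) :
    Set (EuclideanSpace ℝ (Fin 4)) :=
  convexHull ℝ {v | ∃ i : Fin 4, v = (colNorm X i)⁻¹ • (WithLp.toLp 2 (fun k => X k i) : EuclideanSpace ℝ (Fin 4))}

/-- At least two rows of `A` have all entries positive, and every other row of `A`
equals a row of the `4×4` identity matrix. -/
def RowsPosOrId (A : Matrix (Fin 4) (Fin 4) ℝ) : Prop :=
  ∃ R : Finset (Fin 4), 2 ≤ R.card ∧ (∀ i ∈ R, ∀ j, 0 < A i j) ∧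
    (∀ i ∉ R, ∃ k, ∀ j, A i j = if j = k then 1 else 0)

/-- Multiplying by an almost positive bounded matrix contracts the diameter of the
simplex of normalized columns by a definite factor. -/
theorem diam_normColHull_contracts (N K : ℝ) (hN : 1 ≤ N) (hK : 1 ≤ K) :
    ∃ F₁ : ℝ, F₁ < 1 ∧
      ∀ B A : Matrix (Fin 4) (Fin 4) ℝ,
        (∀ i j, 0 ≤ B i j) → (∀ j, ∃ i, B i j ≠ 0) →
        sMax B ≤ K * sSecond B →
        IsUnit A → (∀ i j, ∃ m : ℕ, A i j = (m : ℝ)) → (∀ i j, A i j ≤ N) →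
        RowsPosOrId A →
        Metric.diam (normColHull (B * A)) ≤ F₁ * Metric.diam (normColHull B) := by
  have hNK : (0:ℝ) < 4 * N * K := by nlinarith
  have hNK1 : (1:ℝ) ≤ 4 * N * K := by nlinarith
  set δ : ℝ := (4 * N * K)⁻¹ with hδdef
  have hδ0 : 0 < δ := inv_pos.mpr hNK
  have hinv : δ * (4 * N * K) = 1 := inv_mul_cancel₀ hNK.ne'
  have hδ1 : δ ≤ 1/4 := by nlinarith
  refine ⟨1 - δ, by linarith, ?_⟩
  intro B A hB hBnz hs _hU hNat hbd hrows
  -- nonnegativity of A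
  have hA0 : ∀ i j, 0 ≤ A i j := by
    intro i j; obtain ⟨m, hm⟩ := hNat i j; rw [hm]; positivity
  -- positivity of column norms of B
  have hcol : ∀ i, 0 < colNorm B i := by
    intro i
    obtain ⟨k, hk⟩ := hBnz i
    have h1 : |B k i| ≤ colNorm B i :=
      Finset.single_le_sum (fun k _ => abs_nonneg (B k i)) (Finset.mem_univ k)
    have := abs_pos.mpr hk
    linarith
  obtain ⟨R, hR2, hRpos, _⟩ := hrows
  obtain ⟨i₁, hi₁, i₂, hi₂, hne⟩ := Finset.one_lt_card.mp (by omega : 1 < R.card)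
  set i₀ : Fin 4 := if colNorm B i₁ ≤ colNorm B i₂ then i₂ else i₁ with hi₀def
  have hi₀R : i₀ ∈ R := by rw [hi₀def]; split <;> assumption
  have hsS : sSecond B ≤ colNorm B i₀ := by
    have hmem : (i₁, i₂) ∈ Finset.univ.filter (fun p : Fin 4 × Fin 4 => p.1 ≠ p.2) := by
      simp [hne]
    have h := Finset.inf'_le (b := (i₁, i₂))
      (f := fun p : Fin 4 × Fin 4 => max (colNorm B p.1) (colNorm B p.2)) hmem
    rw [hi₀def]
    rcases le_total (colNorm B i₁) (colNorm B i₂) with h12 | h12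
    · simp only [if_pos h12]
      calc sSecond B ≤ max (colNorm B i₁) (colNorm B i₂) := h
        _ = colNorm B i₂ := max_eq_right h12
    · by_cases hc : colNorm B i₁ ≤ colNorm B i₂
      · simp only [if_pos hc]
        calc sSecond B ≤ max (colNorm B i₁) (colNorm B i₂) := h
          _ = colNorm B i₂ := max_eq_right hc
      · simp only [if_neg hc]
        calc sSecond B ≤ max (colNorm B i₁) (colNorm B i₂) := h
          _ = colNorm B i₁ := max_eq_left h12
  -- A entries in R rows are ≥ 1
  have hA1 : ∀ j, 1 ≤ A i₀ j := by
    intro j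
    obtain ⟨m, hm⟩ := hNat i₀ j
    have hpos := hRpos i₀ hi₀R j
    rw [hm] at hpos ⊢
    exact_mod_cast Nat.one_le_iff_ne_zero.mpr (by exact_mod_cast hpos.ne')
  -- column norms of B*A
  have hmulnorm : ∀ j, colNorm (B * A) j = ∑ i, A i j * colNorm B i := by
    intro j
    unfold colNorm
    calc ∑ k, |(B * A) k j| = ∑ k, ∑ i, B k i * A i j := by
          refine Finset.sum_congr rfl fun k _ => ?_
          rw [Matrix.mul_apply]
          exact abs_of_nonneg (Finset.sum_nonneg fun i _ => mul_nonneg (hB k i) (hA0 i j))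
      _ = ∑ i, ∑ k, B k i * A i j := Finset.sum_comm
      _ = ∑ i, A i j * ∑ k, |B k i| := by
          refine Finset.sum_congr rfl fun i _ => ?_
          rw [Finset.mul_sum]
          exact Finset.sum_congr rfl fun k _ => by rw [abs_of_nonneg (hB k i), mul_comm]
  have hcolmax : ∀ i, colNorm B i ≤ sMax B := fun i =>
    Finset.le_sup' (colNorm B) (Finset.mem_univ i)
  -- upper bound on column norms of B*A
  have htub : ∀ j, colNorm (B * A) j ≤ 4 * N * K * colNorm B i₀ := by
    intro j
    rw [hmulnorm j]
    have hstep : ∀ i : Fin 4, A i j * colNorm B i ≤ N * sMax B := by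
      intro i
      have h1 : colNorm B i ≤ sMax B := hcolmax i
      have h2 : A i j ≤ N := hbd i j
      nlinarith [hA0 i j, (hcol i).le]
    calc ∑ i, A i j * colNorm B i ≤ ∑ _i : Fin 4, N * sMax B :=
          Finset.sum_le_sum fun i _ => hstep i
      _ = 4 * (N * sMax B) := by simp [Finset.sum_const]
      _ ≤ 4 * N * K * colNorm B i₀ := by nlinarith [hcolmax i₁, hcol i₁]
  have htpos : ∀ j, 0 < colNorm (B * A) j := by
    intro j
    rw [hmulnorm j]
    have h1 : (1:ℝ) * colNorm B i₀ ≤ A i₀ j * colNorm B i₀ :=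
      mul_le_mul_of_nonneg_right (hA1 j) (hcol i₀).le
    have h2 : A i₀ j * colNorm B i₀ ≤ ∑ i, A i j * colNorm B i :=
      Finset.single_le_sum (fun i _ => mul_nonneg (hA0 i j) (hcol i).le) (Finset.mem_univ i₀)
    have := hcol i₀
    linarith
  -- the normalized columns of B
  set v : Fin 4 → EuclideanSpace ℝ (Fin 4) :=
    fun i => (colNorm B i)⁻¹ • (WithLp.toLp 2 (fun k => B k i) : EuclideanSpace ℝ (Fin 4)) with hvdef
  have hvmem : ∀ i, v i ∈ normColHull B := fun i =>
    subset_convexHull ℝ _ ⟨i, rfl⟩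
  have hBconv : Convex ℝ (normColHull B) := convex_convexHull ℝ _
  -- the contracted target set
  set T : Set (EuclideanSpace ℝ (Fin 4)) :=
    (fun x => δ • v i₀ + (1 - δ) • x) '' (normColHull B) with hTdef
  have hTconv : Convex ℝ T := by
    rintro _ ⟨x, hx, rfl⟩ _ ⟨y, hy, rfl⟩ a b ha hb hab
    refine ⟨a • x + b • y, hBconv hx hy ha hb hab, ?_⟩
    have hc : a • (δ • v i₀) + b • (δ • v i₀) = δ • v i₀ := by
      rw [← add_smul, hab, one_smul]
    calc δ • v i₀ + (1 - δ) • (a • x + b • y)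
        = (a • (δ • v i₀) + b • (δ • v i₀)) + ((1-δ) • a • x + (1-δ) • b • y) := by
          rw [hc, smul_add]
      _ = a • (δ • v i₀ + (1 - δ) • x) + b • (δ • v i₀ + (1 - δ) • y) := by
          rw [smul_add, smul_add]
          rw [smul_comm (1-δ) a x, smul_comm (1-δ) b y]
          abel
  -- every generator of normColHull (B*A) lies in T
  have hgen : ∀ j : Fin 4,
      (colNorm (B * A) j)⁻¹ • (WithLp.toLp 2 (fun k => (B * A) k j) : EuclideanSpace ℝ (Fin 4)) ∈ T := by
    intro j
    set t : ℝ := colNorm (B * A) j with htdef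
    have ht : 0 < t := htpos j
    set w : Fin 4 → ℝ := fun i => A i j * colNorm B i / t with hwdef
    have hw0 : ∀ i, 0 ≤ w i := fun i =>
      div_nonneg (mul_nonneg (hA0 i j) (hcol i).le) ht.le
    have hwsum : ∑ i, w i = 1 := by
      rw [hwdef]
      rw [← Finset.sum_div, ← hmulnorm j, ← htdef, div_self ht.ne']
    have hwδ : δ ≤ w i₀ := by
      rw [hwdef]
      rw [le_div_iff₀ ht]
      have h1 : δ * t ≤ δ * (4 * N * K * colNorm B i₀) :=
        mul_le_mul_of_nonneg_left (htub j) hδ0.le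
      have h2 : δ * (4 * N * K * colNorm B i₀) = colNorm B i₀ := by
        rw [hδdef]; field_simp
      have h3 : (1:ℝ) * colNorm B i₀ ≤ A i₀ j * colNorm B i₀ :=
        mul_le_mul_of_nonneg_right (hA1 j) (hcol i₀).le
      linarith
    -- the normalized column as a convex combination
    have hu : (t⁻¹ • (WithLp.toLp 2 (fun k => (B * A) k j) : EuclideanSpace ℝ (Fin 4))) = ∑ i, w i • v i := by
      ext k
      have hL : (t⁻¹ • (WithLp.toLp 2 (fun k => (B * A) k j) : EuclideanSpace ℝ (Fin 4))) k
          = t⁻¹ * ∑ i, B k i * A i j := by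
        simp [Matrix.mul_apply]
      have hR : (∑ i, w i • v i) k = ∑ i, w i * ((colNorm B i)⁻¹ * B k i) := by
        rw [hvdef]
        simp [Finset.sum_apply, mul_assoc]
      rw [hL, hR, Finset.mul_sum]
      refine Finset.sum_congr rfl fun i _ => ?_
      rw [hwdef]
      have := (hcol i).ne'
      field_simp
    -- residual weights
    set w' : Fin 4 → ℝ := fun i => if i = i₀ then w i - δ else w i with hw'def
    have hw'0 : ∀ i, 0 ≤ w' i := by
      intro i; rw [hw'def]
      by_cases h : i = i₀
      · simp only [if_pos h]; subst h; linarith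
      · simp only [if_neg h]; exact hw0 i
    have hw'sum : ∑ i, w' i = 1 - δ := by
      rw [hw'def]
      have : (∑ i, (if i = i₀ then w i - δ else w i))
          = ∑ i, (w i - (if i = i₀ then δ else 0)) := by
        refine Finset.sum_congr rfl fun i _ => ?_
        by_cases h : i = i₀ <;> simp [h]
      rw [this, Finset.sum_sub_distrib, hwsum, Finset.sum_ite_eq' Finset.univ i₀ (fun _ => δ)]
      simp
    have hw'pos : 0 < ∑ i, w' i := by rw [hw'sum]; linarith
    set p : EuclideanSpace ℝ (Fin 4) := Finset.univ.centerMass w' v with hpdef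
    have hpmem : p ∈ normColHull B :=
      Finset.centerMass_mem_convexHull Finset.univ (fun i _ => hw'0 i) hw'pos
        (fun i _ => ⟨i, rfl⟩)
    refine ⟨p, hpmem, ?_⟩
    -- show δ • v i₀ + (1-δ) • p equals the normalized column
    have hp2 : (1 - δ) • p = ∑ i, w' i • v i := by
      rw [hpdef, Finset.centerMass, hw'sum, smul_smul,
        mul_inv_cancel₀ (by linarith : (1:ℝ) - δ ≠ 0), one_smul]
    have hsplit : (∑ i, w' i • v i) = (∑ i, w i • v i) - δ • v i₀ := by
      have : ∀ i : Fin 4, w' i • v i = w i • v i - (if i = i₀ then δ else 0) • v i := by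
        intro i; rw [hw'def]
        by_cases h : i = i₀ <;> simp [h, sub_smul]
      rw [Finset.sum_congr rfl fun i _ => this i, Finset.sum_sub_distrib]
      congr 1
      have hite : (∑ i, (if i = i₀ then δ else 0) • v i) = δ • v i₀ := by
        calc ∑ i, (if i = i₀ then δ else (0:ℝ)) • v i
            = ∑ i, (if i = i₀ then δ • v i else 0) :=
              Finset.sum_congr rfl fun i _ => by split <;> simp
          _ = δ • v i₀ := by
              rw [Finset.sum_ite_eq' Finset.univ i₀ (fun i => δ • v i)]
              simp
      exact hite
    show δ • v i₀ + (1 - δ) • p = t⁻¹ • (WithLp.toLp 2 (fun k => (B * A) k j) : EuclideanSpace ℝ (Fin 4))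
    rw [hp2, hsplit, hu]
    abel
  -- conclude via convexity
  have hsub : normColHull (B * A) ⊆ T := by
    refine convexHull_min ?_ hTconv
    rintro x ⟨j, rfl⟩
    exact hgen j
  -- boundedness of normColHull B
  have hbdd : Bornology.IsBounded (normColHull B) := by
    rw [normColHull, isBounded_convexHull]
    have : {v : EuclideanSpace ℝ (Fin 4) |
        ∃ i : Fin 4, v = (colNorm B i)⁻¹ • (WithLp.toLp 2 (fun k => B k i) : EuclideanSpace ℝ (Fin 4))}
        = Set.range (fun i : Fin 4 => (colNorm B i)⁻¹ • (WithLp.toLp 2 (fun k => B k i) : EuclideanSpace ℝ (Fin 4))) := by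
      ext x
      simp only [Set.mem_setOf_eq, Set.mem_range]
      exact ⟨fun ⟨i, h⟩ => ⟨i, h.symm⟩, fun ⟨i, h⟩ => ⟨i, h.symm⟩⟩
    rw [this]
    exact (Set.finite_range _).isBounded
  -- diameter estimate
  refine Metric.diam_le_of_forall_dist_le
    (mul_nonneg (by linarith) Metric.diam_nonneg) ?_
  intro x hx y hy
  obtain ⟨px, hpx, rfl⟩ := hsub hx
  obtain ⟨py, hpy, rfl⟩ := hsub hy
  rw [dist_add_left, dist_smul₀, Real.norm_eq_abs, abs_of_nonneg (by linarith : (0:ℝ) ≤ 1 - δ)]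
  exact mul_le_mul_of_nonneg_left (Metric.dist_le_diam_of_mem hbdd hpx hpy) (by linarith)
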